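/- Let $n = 2^m$ and let $v \in \{\pm 1\}^n$ have at most $\ell$ sign changes. For each Haar wavelet $\psi_{i,j}$ (with scale parameter $i$), we have $2^{-(m-i)/2} \cdot |\langle \psi_{i,j}, v\rangle| \leq 1$; that is, the Haar-weighted $L^\infty$ norm of $Hv$ is at most 1. Consequently the Haar-weighted $L^1$ norm and the Haar-weighted squared $L^2$ norm of $Hv$ are each at most $\ell \log_2 n + 1$. -/

import Mathlib

/-- Entry of the Haar wavelet basis matrix for `ℝ^(2^m)`. -/
noncomputable def haarEntry (m ν a : ℕ) : ℝ :=
  if ν = 0 then 1 / Real.sqrt (2 ^ m)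
  else
    let i := Nat.log 2 ν
    let j := ν - 2 ^ i
    let len := 2 ^ (m - i)
    if len * j ≤ a ∧ a < len * j + len / 2 then 1 / Real.sqrt (len : ℝ)
    else if len * j + len / 2 ≤ a ∧ a < len * (j + 1) then -(1 / Real.sqrt (len : ℝ))
    else 0

/-- The Haar weight `2^{-(m-i)/2}` associated to the `ν`-th Haar wavelet, whose scale is `i`. -/
noncomputable def haarWeight (m ν : ℕ) : ℝ :=
  if ν = 0 then 1 / Real.sqrt (2 ^ m)
  else 1 / Real.sqrt ((2 : ℝ) ^ (m - Nat.log 2 ν))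

lemma entry_eq (m ν a : ℕ) (hν : ν ≠ 0) {i j len : ℕ}
    (hi : i = Nat.log 2 ν) (hj : j = ν - 2 ^ i) (hlen : len = 2 ^ (m - i)) :
    haarEntry m ν a =
      if len * j ≤ a ∧ a < len * j + len / 2 then 1 / Real.sqrt (len : ℝ)
      else if len * j + len / 2 ≤ a ∧ a < len * (j + 1) then -(1 / Real.sqrt (len : ℝ))
      else 0 := by
  subst hi; subst hj; subst hlen; simp [haarEntry, hν]

lemma cancel (c : ℝ) (lo d n : ℕ) (hhi : lo + d + d ≤ n) (v : ℕ → ℝ)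
    (hconst : ∀ a, lo ≤ a → a < lo + d + d → v a = v lo) :
    ∑ a ∈ Finset.range n,
      (if lo ≤ a ∧ a < lo + d then c
       else if lo + d ≤ a ∧ a < lo + d + d then -c else 0) * v a = 0 := by
  have key : ∀ a ∈ Finset.range n,
      (if lo ≤ a ∧ a < lo + d then c
       else if lo + d ≤ a ∧ a < lo + d + d then -c else 0) * v a =
      (if a ∈ Finset.Ico lo (lo + d) then c * v lo else 0) +
      (if a ∈ Finset.Ico (lo + d) (lo + d + d) then -c * v lo else 0) := by
    intro a _
    simp only [Finset.mem_Ico]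
    split_ifs with h1 h2
    · exfalso; omega
    · rw [hconst a (by omega) (by omega)]; ring
    · rw [hconst a (by omega) (by omega)]; ring
    · ring
  rw [Finset.sum_congr rfl key, Finset.sum_add_distrib]
  have hsub1 : Finset.Ico lo (lo + d) ⊆ Finset.range n := by
    intro x hx; simp only [Finset.mem_Ico, Finset.mem_range] at *; omega
  have hsub2 : Finset.Ico (lo + d) (lo + d + d) ⊆ Finset.range n := by
    intro x hx; simp only [Finset.mem_Ico, Finset.mem_range] at *; omega
  rw [Finset.sum_ite_mem, Finset.sum_ite_mem,
      Finset.inter_eq_right.mpr hsub1, Finset.inter_eq_right.mpr hsub2,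
      Finset.sum_const, Finset.sum_const, Nat.card_Ico, Nat.card_Ico]
  have e1 : lo + d - lo = d := by omega
  have e2 : lo + d + d - (lo + d) = d := by omega
  rw [e1, e2]
  push_cast
  ring

lemma exists_change (m ν : ℕ) (hν : ν ≠ 0) (hlt : ν < 2 ^ m) (v : ℕ → ℝ)
    (hne : ∑ a ∈ Finset.range (2 ^ m), haarEntry m ν a * v a ≠ 0) :
    ∃ b, 2 ^ (m - Nat.log 2 ν) * (ν - 2 ^ Nat.log 2 ν) ≤ b ∧
      b + 1 < 2 ^ (m - Nat.log 2 ν) * (ν - 2 ^ Nat.log 2 ν + 1) ∧ v (b + 1) ≠ v b := by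
  by_contra hc
  push_neg at hc
  apply hne
  set i := Nat.log 2 ν with hi
  set j := ν - 2 ^ i with hj
  set len := 2 ^ (m - i) with hlen
  have hilt : i < m := Nat.log_lt_of_lt_pow hν hlt
  have hlen2 : len = 2 * 2 ^ (m - i - 1) := by
    rw [hlen, ← pow_succ']
    congr 1
    omega
  have hd : len / 2 + len / 2 = len := by omega
  set lo := len * j with hlo
  set d := len / 2 with hdd
  have hνlt : ν < 2 * 2 ^ i := by
    have h := Nat.lt_pow_succ_log_self (by norm_num : 1 < 2) ν
    rw [← hi, pow_succ'] at h
    exact h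
  have h2i : 2 ^ i ≤ ν := by rw [hi]; exact Nat.pow_log_le_self 2 hν
  have hjlt : j < 2 ^ i := by omega
  have hsupp : len * (j + 1) ≤ 2 ^ m := by
    calc len * (j + 1) ≤ len * 2 ^ i := Nat.mul_le_mul_left _ (by omega)
    _ = 2 ^ (m - i + i) := by rw [hlen, pow_add]
    _ = 2 ^ m := by congr 1; omega
  have hhi : len * (j + 1) = lo + d + d := by
    have : len * (j + 1) = len * j + len := by ring
    omega
  have hconst : ∀ a, lo ≤ a → a < lo + d + d → v a = v lo := by
    intro a ha hab
    rw [← hhi] at hab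
    induction a, ha using Nat.le_induction with
    | base => rfl
    | succ a ha ih =>
      rw [hc a ha (by omega)]
      exact ih (by omega)
  have hrw : ∀ a ∈ Finset.range (2 ^ m), haarEntry m ν a * v a =
      (if lo ≤ a ∧ a < lo + d then 1 / Real.sqrt (len : ℝ)
       else if lo + d ≤ a ∧ a < lo + d + d then -(1 / Real.sqrt (len : ℝ)) else 0) * v a := by
    intro a _
    rw [entry_eq m ν a hν hi hj hlen, ← hhi]
  rw [Finset.sum_congr rfl hrw]
  exact cancel _ lo d _ (by omega) v hconst

lemma combo (N : ℝ) (hN : 0 < N) (S : ℝ) (hS : |S| ≤ N * (1 / Real.sqrt N)) :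
    (1 / Real.sqrt N) * |S| ≤ 1 := by
  have hs : 0 < Real.sqrt N := Real.sqrt_pos.mpr hN
  calc (1 / Real.sqrt N) * |S| ≤ (1 / Real.sqrt N) * (N * (1 / Real.sqrt N)) :=
        mul_le_mul_of_nonneg_left hS (le_of_lt (one_div_pos.mpr hs))
    _ = N / (Real.sqrt N * Real.sqrt N) := by ring
    _ = 1 := by rw [Real.mul_self_sqrt hN.le, div_self hN.ne']

lemma linf (m ν : ℕ) (hlt : ν < 2 ^ m) (v : ℕ → ℝ) (hv : ∀ a < 2 ^ m, |v a| = 1) :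
    haarWeight m ν * |∑ a ∈ Finset.range (2 ^ m), haarEntry m ν a * v a| ≤ 1 := by
  rcases eq_or_ne ν 0 with rfl | hν
  · have hN : (0:ℝ) < (2:ℝ) ^ m := by positivity
    have hbound : |∑ a ∈ Finset.range (2 ^ m), haarEntry m 0 a * v a| ≤
        ((2:ℝ) ^ m) * (1 / Real.sqrt ((2:ℝ) ^ m)) := by
      calc |∑ a ∈ Finset.range (2 ^ m), haarEntry m 0 a * v a|
          ≤ ∑ a ∈ Finset.range (2 ^ m), |haarEntry m 0 a * v a| :=
            Finset.abs_sum_le_sum_abs _ _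
        _ = ∑ _a ∈ Finset.range (2 ^ m), 1 / Real.sqrt ((2:ℝ) ^ m) := by
            refine Finset.sum_congr rfl fun a ha => ?_
            rw [abs_mul, hv a (Finset.mem_range.mp ha), mul_one]
            simp only [haarEntry, if_pos, ite_true]
            exact abs_of_nonneg (by positivity)
        _ = ((2 ^ m : ℕ) : ℝ) * (1 / Real.sqrt ((2:ℝ) ^ m)) := by
            rw [Finset.sum_const, Finset.card_range, nsmul_eq_mul]
        _ = ((2:ℝ) ^ m) * (1 / Real.sqrt ((2:ℝ) ^ m)) := by push_cast; ring
    have := combo _ hN _ hbound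
    simpa [haarWeight] using this
  · set i := Nat.log 2 ν with hi
    set j := ν - 2 ^ i with hj
    set len := 2 ^ (m - i) with hlen
    have hilt : i < m := Nat.log_lt_of_lt_pow hν hlt
    have hνlt : ν < 2 * 2 ^ i := by
      have h := Nat.lt_pow_succ_log_self (by norm_num : 1 < 2) ν
      rw [← hi, pow_succ'] at h
      exact h
    have h2i : 2 ^ i ≤ ν := by rw [hi]; exact Nat.pow_log_le_self 2 hν
    have hjlt : j < 2 ^ i := by omega
    have hsupp : len * (j + 1) ≤ 2 ^ m := by
      calc len * (j + 1) ≤ len * 2 ^ i := Nat.mul_le_mul_left _ (by omega)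
      _ = 2 ^ (m - i + i) := by rw [hlen, pow_add]
      _ = 2 ^ m := by congr 1; omega
    have hlpos : 0 < len := by rw [hlen]; positivity
    have hNpos : (0:ℝ) < (len : ℝ) := by exact_mod_cast hlpos
    have hcast : ((len : ℕ) : ℝ) = (2:ℝ) ^ (m - i) := by rw [hlen]; push_cast; ring
    have hbound : |∑ a ∈ Finset.range (2 ^ m), haarEntry m ν a * v a| ≤
        ((len : ℕ) : ℝ) * (1 / Real.sqrt (len : ℝ)) := by
      have hsplit : len * (j + 1) = len * j + len := by ring
      calc |∑ a ∈ Finset.range (2 ^ m), haarEntry m ν a * v a|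
          ≤ ∑ a ∈ Finset.range (2 ^ m), |haarEntry m ν a * v a| :=
            Finset.abs_sum_le_sum_abs _ _
        _ ≤ ∑ a ∈ Finset.range (2 ^ m),
              (if a ∈ Finset.Ico (len * j) (len * (j + 1)) then 1 / Real.sqrt (len : ℝ)
               else 0) := by
            refine Finset.sum_le_sum fun a ha => ?_
            rw [abs_mul, hv a (Finset.mem_range.mp ha), mul_one,
                entry_eq m ν a hν hi hj hlen]
            have hnn : (0:ℝ) ≤ 1 / Real.sqrt (len : ℝ) := by positivity
            have hd2 : len / 2 ≤ len := Nat.div_le_self _ _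
            simp only [Finset.mem_Ico]
            have hnn' : (0:ℝ) ≤ (Real.sqrt (len:ℝ))⁻¹ :=
              inv_nonneg.mpr (Real.sqrt_nonneg _)
            split_ifs with h1 h2 h3 h3 <;>
              first
              | (exfalso; omega)
              | (simp [abs_of_nonneg hnn'])
              | (simp only [abs_zero]; positivity)
              | simp
        _ = ∑ a ∈ Finset.range (2 ^ m) ∩ Finset.Ico (len * j) (len * (j + 1)),
              1 / Real.sqrt (len : ℝ) := Finset.sum_ite_mem _ _ _
        _ = ((len : ℕ) : ℝ) * (1 / Real.sqrt (len : ℝ)) := by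
            rw [Finset.inter_eq_right.mpr (fun x hx => by
              simp only [Finset.mem_Ico, Finset.mem_range] at *; omega),
              Finset.sum_const, Nat.card_Ico, nsmul_eq_mul]
            congr 2
            omega
    rw [hcast] at hbound
    have := combo _ (by positivity : (0:ℝ) < (2:ℝ) ^ (m - i)) _ hbound
    rw [haarWeight, if_neg hν, ← hi]
    exact this

lemma supp_le (m ν : ℕ) (hν : ν ≠ 0) (hlt : ν < 2 ^ m) :
    2 ^ (m - Nat.log 2 ν) * (ν - 2 ^ Nat.log 2 ν + 1) ≤ 2 ^ m := by
  set i := Nat.log 2 ν with hi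
  have hilt : i < m := Nat.log_lt_of_lt_pow hν hlt
  have hνlt : ν < 2 * 2 ^ i := by
    have h := Nat.lt_pow_succ_log_self (by norm_num : 1 < 2) ν
    rw [← hi, pow_succ'] at h
    exact h
  have h2i : 2 ^ i ≤ ν := by rw [hi]; exact Nat.pow_log_le_self 2 hν
  calc 2 ^ (m - i) * (ν - 2 ^ i + 1) ≤ 2 ^ (m - i) * 2 ^ i :=
      Nat.mul_le_mul_left _ (by omega)
    _ = 2 ^ (m - i + i) := by rw [pow_add]
    _ = 2 ^ m := by congr 1; omega

theorem stmt_5 (m ℓ : ℕ) (v : ℕ → ℝ)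
    (hv : ∀ a < 2 ^ m, v a = 1 ∨ v a = -1)
    (hsign : ((Finset.range (2 ^ m - 1)).filter (fun i => v (i + 1) ≠ v i)).card ≤ ℓ)
    (Hv : ℕ → ℝ) (hHv : ∀ ν, Hv ν = ∑ a ∈ Finset.range (2 ^ m), haarEntry m ν a * v a) :
    (∀ ν < 2 ^ m, haarWeight m ν * |Hv ν| ≤ 1) ∧
    (∑ ν ∈ Finset.range (2 ^ m), haarWeight m ν * |Hv ν| ≤ ℓ * m + 1) ∧
    (∑ ν ∈ Finset.range (2 ^ m), (haarWeight m ν * Hv ν) ^ 2 ≤ ℓ * m + 1) := by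
  classical
  have habs : ∀ a < 2 ^ m, |v a| = 1 := by
    intro a ha; rcases hv a ha with h | h <;> simp [h]
  have hinf : ∀ ν < 2 ^ m, haarWeight m ν * |Hv ν| ≤ 1 := by
    intro ν hν; rw [hHv]; exact linf m ν hν v habs
  have hwnn : ∀ ν, 0 ≤ haarWeight m ν := by
    intro ν; unfold haarWeight; split_ifs <;> positivity
  set S := (Finset.range (2 ^ m - 1)).filter (fun i => v (i + 1) ≠ v i) with hSdef
  set T := (Finset.range (2 ^ m)).filter (fun ν => ν ≠ 0 ∧ Hv ν ≠ 0) with hTdef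
  -- every ν in T has a sign change in its support
  have hmap : ∀ ν ∈ T, ∃ b, b ∈ S ∧
      2 ^ (m - Nat.log 2 ν) * (ν - 2 ^ Nat.log 2 ν) ≤ b ∧
      b + 1 < 2 ^ (m - Nat.log 2 ν) * (ν - 2 ^ Nat.log 2 ν + 1) := by
    intro ν hνT
    rw [hTdef, Finset.mem_filter, Finset.mem_range] at hνT
    obtain ⟨hr, hν0, hne⟩ := hνT
    rw [hHv] at hne
    obtain ⟨b, hb1, hb2, hb3⟩ := exists_change m ν hν0 hr v hne
    have hb4 : b + 1 < 2 ^ m := lt_of_lt_of_le hb2 (supp_le m ν hν0 hr)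
    refine ⟨b, ?_, hb1, hb2⟩
    rw [hSdef, Finset.mem_filter, Finset.mem_range]
    exact ⟨by omega, hb3⟩
  choose f hfS hf1 hf2 using hmap
  set F : ℕ → ℕ × ℕ := fun ν => (Nat.log 2 ν, if h : ν ∈ T then f ν h else 0) with hFdef
  have hTcard : T.card ≤ m * ℓ := by
    have hle : T.card ≤ ((Finset.range m) ×ˢ S).card := by
      apply Finset.card_le_card_of_injOn F
      · intro ν hνT; simp only [Finset.mem_coe] at hνT ⊢
        have hνT' := hνT
        rw [hTdef, Finset.mem_filter, Finset.mem_range] at hνT'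
        rw [Finset.mem_product]
        constructor
        · exact Finset.mem_range.mpr (Nat.log_lt_of_lt_pow hνT'.2.1 hνT'.1)
        · show (if h : ν ∈ T then f ν h else 0) ∈ S
          rw [dif_pos hνT]; exact hfS ν hνT
      · intro ν hν ν' hν' hF
        have hνT : ν ∈ T := hν
        have hνT' : ν' ∈ T := hν'
        have hd : ν ≠ 0 := by
          have h := hνT; rw [hTdef, Finset.mem_filter] at h; exact h.2.1
        have hd' : ν' ≠ 0 := by
          have h := hνT'; rw [hTdef, Finset.mem_filter] at h; exact h.2.1
        have hlog : Nat.log 2 ν = Nat.log 2 ν' := congrArg Prod.fst hF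
        have hb : f ν hνT = f ν' hνT' := by
          have h := congrArg Prod.snd hF
          simpa [hFdef, dif_pos hνT, dif_pos hνT'] using h
        have e1 : f ν hνT / 2 ^ (m - Nat.log 2 ν) = ν - 2 ^ Nat.log 2 ν :=
          Nat.div_eq_of_lt_le (by rw [mul_comm]; exact hf1 ν hνT)
            (by rw [mul_comm]; have h := hf2 ν hνT; omega)
        have e2 : f ν' hνT' / 2 ^ (m - Nat.log 2 ν') = ν' - 2 ^ Nat.log 2 ν' :=
          Nat.div_eq_of_lt_le (by rw [mul_comm]; exact hf1 ν' hνT')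
            (by rw [mul_comm]; have h := hf2 ν' hνT'; omega)
        have h2ν : 2 ^ Nat.log 2 ν ≤ ν := Nat.pow_log_le_self 2 hd
        have h2ν' : 2 ^ Nat.log 2 ν' ≤ ν' := Nat.pow_log_le_self 2 hd'
        rw [hb, hlog] at e1
        rw [hlog] at h2ν
        omega
    calc T.card ≤ ((Finset.range m) ×ˢ S).card := hle
      _ = m * S.card := by rw [Finset.card_product, Finset.card_range]
      _ ≤ m * ℓ := Nat.mul_le_mul_left _ hsign
  -- L1 bound
  have hins : insert 0 T ⊆ Finset.range (2 ^ m) := by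
    intro x hx
    rcases Finset.mem_insert.mp hx with rfl | hx
    · exact Finset.mem_range.mpr (Nat.two_pow_pos m)
    · rw [hTdef] at hx; exact Finset.mem_filter.mp hx |>.1
  have hzero : ∀ x ∈ Finset.range (2 ^ m), x ∉ insert 0 T →
      haarWeight m x * |Hv x| = 0 := by
    intro x hxr hxn
    rw [Finset.mem_insert] at hxn
    push_neg at hxn
    have hx0 : x ≠ 0 := hxn.1
    have hxT : x ∉ T := hxn.2
    rw [hTdef, Finset.mem_filter] at hxT
    have : Hv x = 0 := by
      by_contra hne
      exact hxT ⟨hxr, hx0, hne⟩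
    rw [this, abs_zero, mul_zero]
  have hL1 : ∑ ν ∈ Finset.range (2 ^ m), haarWeight m ν * |Hv ν| ≤ ℓ * m + 1 := by
    rw [← Finset.sum_subset hins hzero]
    calc ∑ ν ∈ insert 0 T, haarWeight m ν * |Hv ν|
        ≤ (insert 0 T).card • (1:ℝ) := by
          apply Finset.sum_le_card_nsmul
          intro x hx
          exact hinf x (Finset.mem_range.mp (hins hx))
      _ = ((insert 0 T).card : ℝ) := by rw [nsmul_eq_mul, mul_one]
      _ ≤ ((m * ℓ + 1 : ℕ) : ℝ) := by
          have h1 : (insert 0 T).card ≤ T.card + 1 := Finset.card_insert_le _ _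
          have : (insert 0 T).card ≤ m * ℓ + 1 := by omega
          exact_mod_cast this
      _ = (ℓ : ℝ) * m + 1 := by push_cast; ring
  refine ⟨hinf, hL1, ?_⟩
  refine le_trans (Finset.sum_le_sum ?_) hL1
  intro ν hν
  have h1 := hinf ν (Finset.mem_range.mp hν)
  have habs' : haarWeight m ν * |Hv ν| = |haarWeight m ν * Hv ν| := by
    rw [abs_mul, abs_of_nonneg (hwnn ν)]
  have hx0 : 0 ≤ haarWeight m ν * |Hv ν| := mul_nonneg (hwnn ν) (abs_nonneg _)
  calc (haarWeight m ν * Hv ν) ^ 2 = (haarWeight m ν * |Hv ν|) ^ 2 := by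
        rw [habs', sq_abs]
    _ = (haarWeight m ν * |Hv ν|) * (haarWeight m ν * |Hv ν|) := sq _
    _ ≤ (haarWeight m ν * |Hv ν|) * 1 := mul_le_mul_of_nonneg_left h1 hx0
    _ = haarWeight m ν * |Hv ν| := mul_one _
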